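/- arXiv:1910.03542 — 11 statements merged into one kernel-verified Lean document; each statement's English description precedes it below -/
import Mathlib

section
/- Let e : L → L^δ be a canonical extension of a frame L. Then e preserves the bottom element, the top element, finite meets, and directed joins (i.e., e is a preframe homomorphism preserving 0). -/
/-- A Scott-open filter of a frame: an upper set closed under finite meets such that
whenever a directed join lies in it, some member of the directed set lies in it. -/
structure IsScottOpenFilter {L : Type*} [Order.Frame L] (F : Set L) : Prop where
  mem_of_le : ∀ ⦃a b : L⦄, a ∈ F → a ≤ b → b ∈ F
  top_mem : ⊤ ∈ F
  inf_mem : ∀ ⦃a b : L⦄, a ∈ F → b ∈ F → a ⊓ b ∈ F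
  scottOpen : ∀ D : Set L, D.Nonempty → DirectedOn (· ≤ ·) D → sSup D ∈ F → ∃ d ∈ D, d ∈ F

/-- Density axiom for a canonical extension of a frame. -/
def IsCanonicalDense {L C : Type*} [Order.Frame L] [CompleteLattice C] (e : L → C) : Prop :=
  ∀ u v : C,
    (∀ (F : Set L) (a : L), IsScottOpenFilter F → sInf (e '' F) ≤ u → v ≤ e a →
      sInf (e '' F) ≤ e a) → u ≤ v

/-- Compactness axiom for a canonical extension of a frame. -/
def IsCanonicalCompact {L C : Type*} [Order.Frame L] [CompleteLattice C] (e : L → C) : Prop :=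
  ∀ (F : Set L) (a : L), IsScottOpenFilter F → sInf (e '' F) ≤ e a → a ∈ F

/-- A canonical extension `e : L → L^δ` of a frame preserves the bottom element, the
top element, binary (hence finite) meets, and directed joins: it is a preframe
homomorphism preserving `0`. -/
theorem canonicalExtension_preframeHom {L C : Type*} [Order.Frame L] [CompleteLattice C]
    (e : L → C) (hmono : Monotone e) (hdense : IsCanonicalDense e)
    (hcompact : IsCanonicalCompact e) :
    e ⊥ = ⊥ ∧ e ⊤ = ⊤ ∧ (∀ a b : L, e (a ⊓ b) = e a ⊓ e b) ∧
      ∀ D : Set L, D.Nonempty → DirectedOn (· ≤ ·) D → e (sSup D) = sSup (e '' D) := by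
  have hmem : ∀ (F : Set L) (a : L), a ∈ F → sInf (e '' F) ≤ e a :=
    fun F a ha => sInf_le (Set.mem_image_of_mem e ha)
  refine ⟨?_, ?_, ?_, ?_⟩
  · refine le_antisymm (hdense (e ⊥) ⊥ ?_) bot_le
    intro F a hF hle _
    exact hmem F a (hF.mem_of_le (hcompact F ⊥ hF hle) bot_le)
  · refine le_antisymm le_top (hdense ⊤ (e ⊤) ?_)
    intro F a hF _ hle
    exact (hmem F ⊤ hF.top_mem).trans hle
  · intro a b
    refine le_antisymm (le_inf (hmono inf_le_left) (hmono inf_le_right)) ?_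
    refine hdense _ _ ?_
    intro F c hF hle hle2
    have ha := hcompact F a hF (hle.trans inf_le_left)
    have hb := hcompact F b hF (hle.trans inf_le_right)
    exact (hmem F _ (hF.inf_mem ha hb)).trans hle2
  · intro D hne hdir
    refine le_antisymm (hdense _ _ ?_) (sSup_le ?_)
    · intro F a hF hle hle2
      obtain ⟨d, hdD, hdF⟩ := hF.scottOpen D hne hdir (hcompact F _ hF hle)
      exact (hmem F d hdF).trans ((le_sSup (Set.mem_image_of_mem e hdD)).trans hle2)
    · rintro x ⟨d, hd, rfl⟩
      exact hmono (le_sSup hd)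
end

section
/- Let e : L → L^δ be a canonical extension of a frame L. The map e^∨ : F ↦ ⋀e[F], from Scott-open filters of L (ordered by reverse inclusion) to L^δ, is injective, preserves the bottom element, binary joins, and filtered meets. -/
/-- The map `e^∨ : F ↦ ⋀ e[F]` on Scott-open filters (ordered by reverse inclusion, so
that the bottom filter is `↑⊥ = L`, the join of `F` and `G` is `F ∩ G`, and filtered
meets are directed unions) is injective, preserves the bottom element, binary joins and
filtered meets. -/
theorem canonicalExtension_eSO_properties {L C : Type*} [Order.Frame L] [CompleteLattice C]
    (e : L → C) (hmono : Monotone e) (hdense : IsCanonicalDense e)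
    (hcompact : IsCanonicalCompact e) :
    (∀ F G : Set L, IsScottOpenFilter F → IsScottOpenFilter G →
        sInf (e '' F) = sInf (e '' G) → F = G) ∧
    sInf (e '' (Set.univ : Set L)) = ⊥ ∧
    (∀ F G : Set L, IsScottOpenFilter F → IsScottOpenFilter G →
        sInf (e '' (F ∩ G)) = sInf (e '' F) ⊔ sInf (e '' G)) ∧
    (∀ 𝓕 : Set (Set L), 𝓕.Nonempty → (∀ F ∈ 𝓕, IsScottOpenFilter F) →
        DirectedOn (· ⊆ ·) 𝓕 → sInf (e '' ⋃₀ 𝓕) = ⨅ F ∈ 𝓕, sInf (e '' F)) := by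
  have key : ∀ (F : Set L) (a : L), a ∈ F → sInf (e '' F) ≤ e a := fun F a ha =>
    sInf_le ⟨a, ha, rfl⟩
  refine ⟨?_, ?_, ?_, ?_⟩
  · intro F G hF hG h
    ext a
    constructor
    · intro ha; exact hcompact G a hG (h ▸ key F a ha)
    · intro ha; exact hcompact F a hF (h.symm ▸ key G a ha)
  · refine le_antisymm (hdense _ ⊥ ?_) bot_le
    intro H a hH h1 _
    exact h1.trans (key _ a trivial)
  · intro F G hF hG
    refine le_antisymm (hdense _ _ ?_) (sup_le
      (sInf_le_sInf (Set.image_mono (f := e) Set.inter_subset_left))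
      (sInf_le_sInf (Set.image_mono (f := e) Set.inter_subset_right)))
    intro H a hH h1 h2
    have haF : a ∈ F := hcompact F a hF (le_sup_left.trans h2)
    have haG : a ∈ G := hcompact G a hG (le_sup_right.trans h2)
    exact h1.trans (key _ a ⟨haF, haG⟩)
  · intro 𝓕 _ _ _
    refine le_antisymm (le_iInf₂ fun F hF =>
      sInf_le_sInf (Set.image_mono (f := e) (Set.subset_sUnion_of_mem hF))) ?_
    refine le_sInf ?_
    rintro b ⟨a, ⟨F, hF, haF⟩, rfl⟩
    exact iInf₂_le_of_le F hF (key F a haF)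
end

section
/- Let e : L → L^δ be a canonical extension of a frame L. If e is injective, then e preserves binary joins, hence is a frame homomorphism. -/
/-- If a canonical extension `e : L → L^δ` of a frame is injective, then it preserves
binary joins, and hence (together with the finite meets, `⊤` and directed joins it
always preserves) it is a frame homomorphism. -/
theorem canonicalExtension_injective_frameHom {L C : Type*} [Order.Frame L] [CompleteLattice C]
    (e : L → C) (hmono : Monotone e) (hdense : IsCanonicalDense e)
    (hcompact : IsCanonicalCompact e) (hinj : Function.Injective e) :
    (∀ a b : L, e (a ⊔ b) = e a ⊔ e b) ∧
    (∀ S : Set L, e (sSup S) = sSup (e '' S)) ∧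
    (∀ a b : L, e (a ⊓ b) = e a ⊓ e b) ∧ e ⊤ = ⊤ := by
  -- e preserves binary meets
  have hmeet : ∀ a b : L, e (a ⊓ b) = e a ⊓ e b := by
    intro a b
    refine le_antisymm (le_inf (hmono inf_le_left) (hmono inf_le_right)) ?_
    refine hdense _ _ ?_
    intro F c hF h1 h2
    have ha : a ∈ F := hcompact F a hF (h1.trans inf_le_left)
    have hb : b ∈ F := hcompact F b hF (h1.trans inf_le_right)
    have hab : a ⊓ b ∈ F := hF.inf_mem ha hb
    exact (sInf_le (Set.mem_image_of_mem e hab)).trans h2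
  -- e reflects order
  have hrefl : ∀ a b : L, e a ≤ e b → a ≤ b := by
    intro a b h
    have : e (a ⊓ b) = e a := by rw [hmeet, inf_eq_left.2 h]
    exact inf_eq_left.1 (hinj this)
  -- key: sups of directed-closures
  have hkey : ∀ (F : Set L) (S : Set L) (c : L), IsScottOpenFilter F → sSup S ∈ F →
      (∀ s ∈ S, s ≤ c) → c ∈ F := by
    intro F S c hF hS hc
    classical
    set D : Set L := {x | ∃ T : Finset L, ↑T ⊆ S ∧ x = T.sup id} with hD
    have hne : D.Nonempty := ⟨⊥, ∅, by simp⟩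
    have hdir : DirectedOn (· ≤ ·) D := by
      rintro _ ⟨T1, hT1, rfl⟩ _ ⟨T2, hT2, rfl⟩
      refine ⟨(T1 ∪ T2).sup id, ⟨T1 ∪ T2, ?_, rfl⟩, ?_, ?_⟩
      · push_cast; exact Set.union_subset hT1 hT2
      · exact Finset.sup_mono Finset.subset_union_left
      · exact Finset.sup_mono Finset.subset_union_right
    have hsup : sSup D = sSup S := by
      apply le_antisymm
      · apply sSup_le
        rintro _ ⟨T, hT, rfl⟩
        exact Finset.sup_le fun t ht => le_sSup (hT ht)
      · exact sSup_le fun s hs => le_sSup ⟨{s}, by simpa using hs, by simp⟩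
    obtain ⟨d, ⟨T, hT, rfl⟩, hdF⟩ := hF.scottOpen D hne hdir (by rwa [hsup])
    exact hF.mem_of_le hdF (Finset.sup_le fun t ht => hc t (hT ht))
  -- binary joins
  have hjoin : ∀ a b : L, e (a ⊔ b) = e a ⊔ e b := by
    intro a b
    refine le_antisymm ?_ (sup_le (hmono le_sup_left) (hmono le_sup_right))
    refine hdense _ _ ?_
    intro F c hF h1 h2
    have hab : a ⊔ b ∈ F := hcompact F (a ⊔ b) hF h1
    have : a ⊔ b ∈ F → c ∈ F := fun h => hF.mem_of_le h
      (sup_le (hrefl a c (le_sup_left.trans h2)) (hrefl b c (le_sup_right.trans h2)))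
    exact sInf_le (Set.mem_image_of_mem e (this hab))
  -- arbitrary sups
  have hssup : ∀ S : Set L, e (sSup S) = sSup (e '' S) := by
    intro S
    refine le_antisymm ?_ (sSup_le (by rintro _ ⟨s, hs, rfl⟩; exact hmono (le_sSup hs)))
    refine hdense _ _ ?_
    intro F c hF h1 h2
    have hS : sSup S ∈ F := hcompact F (sSup S) hF h1
    have hc : ∀ s ∈ S, s ≤ c := fun s hs =>
      hrefl s c ((le_sSup (Set.mem_image_of_mem e hs)).trans h2)
    exact sInf_le (Set.mem_image_of_mem e (hkey F S c hF hS hc))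
  -- top
  have htop : e ⊤ = ⊤ := by
    refine le_antisymm le_top ?_
    refine hdense _ _ ?_
    intro F c hF _ h2
    exact (sInf_le (Set.mem_image_of_mem e hF.top_mem)).trans h2
  exact ⟨hjoin, hssup, hmeet, htop⟩
end

section
/- If L is a locally compact (continuous) frame, then any canonical extension e : L → L^δ is an injective frame homomorphism. -/
/-- The way-below relation: `c ≪ a` iff every directed set whose join dominates `a`
contains an element above `c`. -/
def WayBelow {L : Type*} [Order.Frame L] (c a : L) : Prop :=
  ∀ D : Set L, D.Nonempty → DirectedOn (· ≤ ·) D → a ≤ sSup D → ∃ d ∈ D, c ≤ d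

section Aux

variable {L : Type*} [Order.Frame L]

lemma wayBelow_le {c a : L} (h : WayBelow c a) : c ≤ a := by
  obtain ⟨d, hd, hcd⟩ := h {a} ⟨a, rfl⟩
    (fun x hx y hy => ⟨a, rfl, by simp_all, by simp_all⟩) (by simp)
  simp only [Set.mem_singleton_iff] at hd
  exact hd ▸ hcd

lemma wayBelow_mono_left {x c a : L} (hx : x ≤ c) (h : WayBelow c a) : WayBelow x a := by
  intro D hne hdir hle
  obtain ⟨d, hd, hcd⟩ := h D hne hdir hle
  exact ⟨d, hd, hx.trans hcd⟩

lemma wayBelow_mono_right {c a b : L} (h : WayBelow c a) (hab : a ≤ b) : WayBelow c b :=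
  fun D hne hdir hle => h D hne hdir (hab.trans hle)

lemma bot_wayBelow (a : L) : WayBelow ⊥ a :=
  fun _D hne _ _ => ⟨hne.choose, hne.choose_spec, bot_le⟩

lemma sup_wayBelow {c d a : L} (hc : WayBelow c a) (hd : WayBelow d a) :
    WayBelow (c ⊔ d) a := by
  intro D hne hdir hle
  obtain ⟨d₁, hd₁, h₁⟩ := hc D hne hdir hle
  obtain ⟨d₂, hd₂, h₂⟩ := hd D hne hdir hle
  obtain ⟨d₃, hd₃, h₃, h₄⟩ := hdir d₁ hd₁ d₂ hd₂
  exact ⟨d₃, hd₃, sup_le (h₁.trans h₃) (h₂.trans h₄)⟩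

/-- Interpolation property of the way-below relation in a continuous frame. -/
lemma wayBelow_interpolate (hLC : ∀ a : L, a = sSup {c : L | WayBelow c a})
    {c a : L} (h : WayBelow c a) : ∃ b, WayBelow c b ∧ WayBelow b a := by
  set S : Set L := {d : L | ∃ b, WayBelow d b ∧ WayBelow b a} with hS
  have hne : S.Nonempty := ⟨⊥, ⊥, bot_wayBelow ⊥, bot_wayBelow a⟩
  have hdir : DirectedOn (· ≤ ·) S := by
    rintro d₁ ⟨b₁, h₁, hb₁⟩ d₂ ⟨b₂, h₂, hb₂⟩
    refine ⟨d₁ ⊔ d₂, ⟨b₁ ⊔ b₂,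
      sup_wayBelow (wayBelow_mono_right h₁ le_sup_left)
        (wayBelow_mono_right h₂ le_sup_right),
      sup_wayBelow hb₁ hb₂⟩, le_sup_left, le_sup_right⟩
  have hsup : a ≤ sSup S := by
    conv_lhs => rw [hLC a]
    refine sSup_le fun b hb => ?_
    conv_lhs => rw [hLC b]
    exact sSup_le fun d hd => le_sSup ⟨b, hd, hb⟩
  obtain ⟨d, ⟨b, hdb, hba⟩, hcd⟩ := h S hne hdir hsup
  exact ⟨b, wayBelow_mono_left hcd hdb, hba⟩

/-- In a continuous frame, `c ≪ a` yields a Scott-open filter `F` with `a ∈ F ⊆ ↑c`. -/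
lemma exists_scottOpenFilter (hLC : ∀ a : L, a = sSup {c : L | WayBelow c a})
    {c a : L} (h : WayBelow c a) :
    ∃ F : Set L, IsScottOpenFilter F ∧ a ∈ F ∧ ∀ x ∈ F, c ≤ x := by
  classical
  -- an interpolation step function
  have step : ∀ b : {b : L // WayBelow c b}, {d : L // WayBelow c d ∧ WayBelow d b.1} := by
    intro b
    have h' := wayBelow_interpolate hLC b.2
    exact ⟨h'.choose, h'.choose_spec⟩
  let x : ℕ → {b : L // WayBelow c b} :=
    fun n => Nat.rec ⟨a, h⟩ (fun _ b => ⟨(step b).1, (step b).2.1⟩) n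
  have hstep : ∀ n, WayBelow (x (n + 1)).1 (x n).1 := fun n => (step (x n)).2.2
  have hmonoSeq : ∀ m n, m ≤ n → (x n).1 ≤ (x m).1 := by
    intro m n hmn
    induction n, hmn using Nat.le_induction with
    | base => exact le_rfl
    | succ k hk ih => exact (wayBelow_le (hstep k)).trans ih
  refine ⟨{z : L | ∃ n, WayBelow (x n).1 z}, ⟨?_, ?_, ?_, ?_⟩, ?_, ?_⟩
  · rintro y z ⟨n, hn⟩ hyz
    exact ⟨n, wayBelow_mono_right hn hyz⟩
  · exact ⟨1, wayBelow_mono_right (hstep 0) le_top⟩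
  · rintro y z ⟨n, hn⟩ ⟨m, hm⟩
    refine ⟨max n m + 1, ?_⟩
    have hy : (x (max n m)).1 ≤ y :=
      wayBelow_le (wayBelow_mono_left (hmonoSeq n _ (le_max_left n m)) hn)
    have hz : (x (max n m)).1 ≤ z :=
      wayBelow_le (wayBelow_mono_left (hmonoSeq m _ (le_max_right n m)) hm)
    exact wayBelow_mono_right (hstep (max n m)) (le_inf hy hz)
  · rintro D hne hdir ⟨n, hn⟩
    obtain ⟨d, hd, hxd⟩ := hn D hne hdir le_rfl
    exact ⟨d, hd, n + 1, wayBelow_mono_right (hstep n) hxd⟩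
  · exact ⟨1, hstep 0⟩
  · rintro z ⟨n, hn⟩
    exact (wayBelow_le (x n).2).trans (wayBelow_le hn)

end Aux

/-- If `L` is a locally compact (continuous) frame, then any canonical extension
`e : L → L^δ` is an injective frame homomorphism. -/
theorem canonicalExtension_locallyCompact_injective_frameHom {L C : Type*} [Order.Frame L]
    [CompleteLattice C] (hLC : ∀ a : L, a = sSup {c : L | WayBelow c a})
    (e : L → C) (hmono : Monotone e) (hdense : IsCanonicalDense e)
    (hcompact : IsCanonicalCompact e) :
    Function.Injective e ∧
    (∀ S : Set L, e (sSup S) = sSup (e '' S)) ∧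
    (∀ a b : L, e (a ⊓ b) = e a ⊓ e b) ∧ e ⊤ = ⊤ := by
  have hinf_le : ∀ (F : Set L) (x : L), x ∈ F → sInf (e '' F) ≤ e x :=
    fun F x hx => sInf_le ⟨x, hx, rfl⟩
  -- order reflection
  have hrefl : ∀ a b : L, e a ≤ e b → a ≤ b := by
    intro a b hab
    conv_lhs => rw [hLC a]
    refine sSup_le fun c hc => ?_
    obtain ⟨F, hF, haF, hFc⟩ := exists_scottOpenFilter hLC hc
    exact hFc b (hcompact F b hF ((hinf_le F a haF).trans hab))
  refine ⟨?_, ?_, ?_, ?_⟩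
  · intro a b hab
    exact le_antisymm (hrefl a b hab.le) (hrefl b a hab.ge)
  · intro S
    refine le_antisymm ?_ (sSup_le ?_)
    · refine hdense _ _ fun F a hF h1 h2 => ?_
      have hSF : sSup S ∈ F := hcompact F (sSup S) hF h1
      have hSa : sSup S ≤ a := sSup_le fun s hs =>
        hrefl s a ((le_sSup (Set.mem_image_of_mem e hs)).trans h2)
      exact hinf_le F a (hF.mem_of_le hSF hSa)
    · rintro _ ⟨s, hs, rfl⟩
      exact hmono (le_sSup hs)
  · intro a b
    refine le_antisymm (le_inf (hmono inf_le_left) (hmono inf_le_right)) ?_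
    refine hdense _ _ fun F x hF h1 h2 => ?_
    have haF : a ∈ F := hcompact F a hF (h1.trans inf_le_left)
    have hbF : b ∈ F := hcompact F b hF (h1.trans inf_le_right)
    exact (hinf_le F (a ⊓ b) (hF.inf_mem haF hbF)).trans h2
  · refine le_antisymm le_top (hdense _ _ fun F x hF _ h2 => ?_)
    exact (hinf_le F ⊤ hF.top_mem).trans h2
end

section
/- Let e : L → L^δ be a canonical extension of a frame L. For any collection {F_i}_{i∈I} of Scott-open filters of L, ⋁_i ⋀e[F_i] = ⋀ e[⋂_i F_i] in L^δ. -/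
/-- For a canonical extension `e : L → L^δ` of a frame and any collection `{F_i}` of
Scott-open filters, `⋁_i ⋀ e[F_i] = ⋀ e[⋂_i F_i]`. -/
theorem canonicalExtension_sup_eSO_inter {L C : Type*} [Order.Frame L] [CompleteLattice C]
    (e : L → C) (hmono : Monotone e) (hdense : IsCanonicalDense e)
    (hcompact : IsCanonicalCompact e) {ι : Sort*} (F : ι → Set L)
    (hF : ∀ i, IsScottOpenFilter (F i)) :
    (⨆ i, sInf (e '' F i)) = sInf (e '' ⋂ i, F i) := by
  apply le_antisymm
  · exact iSup_le fun i => sInf_le_sInf (Set.image_mono (Set.iInter_subset F i))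
  · apply hdense
    intro G a hG hGle hsup
    have ha : a ∈ ⋂ i, F i := Set.mem_iInter.2 fun i =>
      hcompact (F i) a (hF i) ((le_iSup (fun i => sInf (e '' F i)) i).trans hsup)
    exact hGle.trans (sInf_le ⟨a, ha, rfl⟩)
end

section
/- Let e : L → L^δ be a monotone map from a frame L into a complete lattice satisfying the density axiom. Then e satisfies the compactness axiom if and only if it satisfies the stronger condition: whenever ⋀{⋀e[F] | F ∈ 𝓕} ≤ ⋁e[D] for a filtered family 𝓕 of Scott-open filters (filtered with respect to reverse inclusion, i.e., up-directed under inclusion) and a directed set D ⊆ L, there exist F ∈ 𝓕 and d ∈ D with d ∈ F. -/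
/-- For a monotone map `e : L → L^δ` satisfying density, the compactness axiom is
equivalent to the stronger condition (Compact+): whenever
`⋀{⋀e[F] | F ∈ 𝓕} ≤ ⋁ e[D]` for a filtered (w.r.t. reverse inclusion, i.e.
up-directed under inclusion) family `𝓕` of Scott-open filters and a directed `D ⊆ L`,
some `d ∈ D` belongs to some `F ∈ 𝓕`. -/
theorem canonicalCompact_iff_compactPlus {L C : Type*} [Order.Frame L] [CompleteLattice C]
    (e : L → C) (hmono : Monotone e) (hdense : IsCanonicalDense e) :
    IsCanonicalCompact e ↔
      ∀ 𝓕 : Set (Set L), 𝓕.Nonempty → (∀ F ∈ 𝓕, IsScottOpenFilter F) →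
        DirectedOn (· ⊆ ·) 𝓕 →
        ∀ D : Set L, D.Nonempty → DirectedOn (· ≤ ·) D →
          (⨅ F ∈ 𝓕, sInf (e '' F)) ≤ sSup (e '' D) →
          ∃ F ∈ 𝓕, ∃ d ∈ D, d ∈ F := by
  constructor
  · intro hcomp 𝓕 hne hsof hdir D hDne hDdir hle
    set G : Set L := ⋃₀ 𝓕 with hG
    have hGsof : IsScottOpenFilter G := by
      constructor
      · rintro a b ⟨F, hF, haF⟩ hab
        exact ⟨F, hF, (hsof F hF).mem_of_le haF hab⟩
      · obtain ⟨F, hF⟩ := hne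
        exact ⟨F, hF, (hsof F hF).top_mem⟩
      · rintro a b ⟨F1, hF1, haF1⟩ ⟨F2, hF2, hbF2⟩
        obtain ⟨F3, hF3, h13, h23⟩ := hdir F1 hF1 F2 hF2
        exact ⟨F3, hF3, (hsof F3 hF3).inf_mem (h13 haF1) (h23 hbF2)⟩
      · rintro E hEne hEdir ⟨F, hF, hsE⟩
        obtain ⟨d, hd, hdF⟩ := (hsof F hF).scottOpen E hEne hEdir hsE
        exact ⟨d, hd, F, hF, hdF⟩
    have h1 : sInf (e '' G) ≤ ⨅ F ∈ 𝓕, sInf (e '' F) := by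
      refine le_iInf₂ fun F hF => sInf_le_sInf ?_
      exact Set.image_mono fun x hx => ⟨F, hF, hx⟩
    have h2 : sSup (e '' D) ≤ e (sSup D) := by
      refine sSup_le ?_
      rintro _ ⟨d, hd, rfl⟩
      exact hmono (le_sSup hd)
    have hmem : sSup D ∈ G := hcomp G (sSup D) hGsof (h1.trans (hle.trans h2))
    obtain ⟨d, hd, F, hF, hdF⟩ := hGsof.scottOpen D hDne hDdir hmem
    exact ⟨F, hF, d, hd, hdF⟩
  · intro h F a hF hle
    obtain ⟨F', hF', d, hd, hdF'⟩ :=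
      h {F} ⟨F, rfl⟩ (by rintro _ rfl; exact hF)
        (by rintro _ rfl _ rfl; exact ⟨_, rfl, subset_rfl, subset_rfl⟩)
        {a} ⟨a, rfl⟩ (by rintro _ rfl _ rfl; exact ⟨_, rfl, le_rfl, le_rfl⟩)
        (by simpa using hle)
    obtain rfl : F' = F := hF'
    obtain rfl : d = a := hd
    exact hdF'
end

section
/- For any frame L, a canonical extension of L exists: define, on the lattice of filters of L ordered by reverse inclusion, the closure operator sending a filter F to the intersection of all Scott-open filters containing F; then its fixpoints (the filters that are intersections of Scott-open filters) form a complete lattice C, and the map e : L → C, a ↦ ⋂{F Scott-open | a ∈ F} (equivalently, the closure of the principal filter ↑a), is dense and compact. -/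
attribute [-instance] Subtype.instLE Subtype.instLT Subtype.preorder Subtype.partialOrder
  Subtype.instLinearOrder

namespace CanonExtAux

variable {L : Type*} [Order.Frame L]

/-- The closure operator: intersection of all Scott-open filters containing `S`. -/
def clF (S : Set L) : Set L := ⋂₀ {G : Set L | IsScottOpenFilter G ∧ S ⊆ G}

lemma subset_clF (S : Set L) : S ⊆ clF S :=
  fun x hx => Set.mem_sInter.2 fun _ hG => hG.2 hx

lemma clF_subset {S G : Set L} (hG : IsScottOpenFilter G) (h : S ⊆ G) : clF S ⊆ G :=
  Set.sInter_subset_of_mem ⟨hG, h⟩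

/-- The canonical extension: fixpoints of the closure operator. -/
abbrev CExt (L : Type*) [Order.Frame L] :=
  {F : Set L // F = ⋂₀ {G : Set L | IsScottOpenFilter G ∧ F ⊆ G}}

lemma fix_eq (x : CExt L) : clF (x : Set L) = (x : Set L) := x.2.symm

instance : PartialOrder (CExt L) where
  le x y := (y : Set L) ⊆ (x : Set L)
  le_refl x := fun a ha => ha
  le_trans x y z h1 h2 := fun a ha => h1 (h2 ha)
  le_antisymm x y h1 h2 := Subtype.ext (subset_antisymm h2 h1)

lemma le_def {x y : CExt L} : x ≤ y ↔ (y : Set L) ⊆ (x : Set L) := Iff.rfl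

instance : SupSet (CExt L) where
  sSup s := ⟨⋂ x ∈ s, (x : Set L), by
    refine subset_antisymm (subset_clF _) ?_
    refine Set.subset_iInter₂ fun x hx => ?_
    calc clF (⋂ x ∈ s, (x : Set L)) ⊆ clF (x : Set L) := fun z hz =>
          Set.mem_sInter.2 fun G hG =>
            Set.mem_sInter.1 hz G ⟨hG.1, (Set.biInter_subset_of_mem hx).trans hG.2⟩
      _ = (x : Set L) := fix_eq x⟩

noncomputable instance : CompleteLattice (CExt L) :=
  completeLatticeOfSup _ fun s =>
    ⟨fun x hx => le_def.2 (Set.biInter_subset_of_mem hx),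
     fun w hw => le_def.2 (Set.subset_iInter₂ fun x hx => le_def.1 (hw hx))⟩

/-- The embedding. -/
def emb (a : L) : CExt L :=
  ⟨⋂₀ {G : Set L | IsScottOpenFilter G ∧ a ∈ G}, by
    refine subset_antisymm (fun x hx => Set.mem_sInter.2 fun G hG => ?_)
      (fun x hx => Set.mem_sInter.2 fun G hG => ?_)
    · exact hG.2 hx
    · exact Set.mem_sInter.1 hx G ⟨hG.1, Set.sInter_subset_of_mem ⟨hG.1, hG.2⟩⟩⟩

lemma self_mem_emb (a : L) : a ∈ (emb a : Set L) :=
  Set.mem_sInter.2 fun _ hG => hG.2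

lemma emb_subset {a : L} {G : Set L} (hG : IsScottOpenFilter G) (ha : a ∈ G) :
    (emb a : Set L) ⊆ G :=
  Set.sInter_subset_of_mem ⟨hG, ha⟩

lemma le_emb {v : CExt L} {a : L} (ha : a ∈ (v : Set L)) : v ≤ emb a := by
  rw [le_def]
  intro x hx
  rw [← fix_eq v]
  exact Set.mem_sInter.2 fun G hG => Set.mem_sInter.1 hx G ⟨hG.1, hG.2 ha⟩

lemma sInf_emb_image {F : Set L} (hF : IsScottOpenFilter F) :
    sInf (emb '' F) = ⟨F, subset_antisymm (subset_clF F) (clF_subset hF subset_rfl)⟩ := by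
  refine IsGLB.sInf_eq ⟨?_, ?_⟩
  · rintro b ⟨a, ha, rfl⟩
    exact le_def.2 (emb_subset hF ha)
  · intro w hw
    refine le_def.2 fun x hx => ?_
    exact le_def.1 (hw ⟨x, hx, rfl⟩) (self_mem_emb x)

end CanonExtAux

open CanonExtAux in
/-- Existence of canonical extensions: for any frame `L`, the fixpoints of the closure
operator on filters sending `F` to the intersection of all Scott-open filters
containing it (i.e. the filters which are intersections of Scott-open filters), ordered
by reverse inclusion, form a complete lattice `C`, and the map
`e : a ↦ ⋂{F Scott-open | a ∈ F}` (the closure of `↑a`) is dense and compact. -/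
theorem canonicalExtension_exists {L : Type*} [Order.Frame L] :
    ∃ (inst : CompleteLattice {F : Set L // F = ⋂₀ {G : Set L | IsScottOpenFilter G ∧ F ⊆ G}})
      (e : L → {F : Set L // F = ⋂₀ {G : Set L | IsScottOpenFilter G ∧ F ⊆ G}}),
      (∀ x y : {F : Set L // F = ⋂₀ {G : Set L | IsScottOpenFilter G ∧ F ⊆ G}},
          inst.le x y ↔ (y : Set L) ⊆ (x : Set L)) ∧
      (∀ a : L, (e a : Set L) = ⋂₀ {G : Set L | IsScottOpenFilter G ∧ a ∈ G}) ∧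
      @IsCanonicalDense L _ _ inst e ∧ @IsCanonicalCompact L _ _ inst e := by
  refine ⟨inferInstance, emb, fun x y => Iff.rfl, fun a => rfl, ?_, ?_⟩
  · -- dense
    intro u v h
    rw [le_def]
    intro x hx
    rw [← fix_eq u]
    refine Set.mem_sInter.2 fun G hG => ?_
    have h1 : sInf (emb '' G) ≤ u := by
      rw [sInf_emb_image hG.1, le_def]; exact hG.2
    have h2 := h G x hG.1 h1 (le_emb hx)
    rw [sInf_emb_image hG.1, le_def] at h2
    exact h2 (self_mem_emb x)
  · -- compact
    intro F a hF h
    rw [sInf_emb_image hF, le_def] at h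
    exact h (self_mem_emb a)
end

section
/- Canonical extensions of a frame are unique: if e : L → C and e' : L → C' are both dense and compact monotone maps from a frame L into complete lattices, then there is a (unique) complete lattice isomorphism ι : C' → C with ι ∘ e' = e. -/
section Aux

variable {L C C' : Type*} [Order.Frame L] [CompleteLattice C] [CompleteLattice C']

/-- The comparison map between two candidate canonical extensions. -/
noncomputable def canExt (e : L → C) (e' : L → C') (v : C') : C :=
  sSup { x : C | ∃ F : Set L, IsScottOpenFilter F ∧ sInf (e' '' F) ≤ v ∧ x = sInf (e '' F) }

lemma canExt_mono (e : L → C) (e' : L → C') : Monotone (canExt e e') := by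
  intro u v huv
  refine sSup_le ?_
  rintro x ⟨F, hF, h1, rfl⟩
  exact le_sSup ⟨F, hF, h1.trans huv, rfl⟩

lemma canExt_le_e {e : L → C} {e' : L → C'} (hc' : IsCanonicalCompact e') {v : C'} {a : L}
    (h : v ≤ e' a) : canExt e e' v ≤ e a := by
  refine sSup_le ?_
  rintro x ⟨F, hF, h1, rfl⟩
  exact sInf_le (Set.mem_image_of_mem e (hc' F a hF (h1.trans h)))

lemma e_le_canExt {e : L → C} {e' : L → C'} (hd : IsCanonicalDense e)
    (hc : IsCanonicalCompact e) (a : L) : e a ≤ canExt e e' (e' a) := by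
  refine hd _ _ fun F b hF h1 h2 => ?_
  have ha : a ∈ F := hc F a hF h1
  have : sInf (e '' F) ≤ canExt e e' (e' a) :=
    le_sSup ⟨F, hF, sInf_le (Set.mem_image_of_mem e' ha), rfl⟩
  exact this.trans h2

lemma canExt_e' {e : L → C} {e' : L → C'} (hd : IsCanonicalDense e) (hc : IsCanonicalCompact e)
    (hc' : IsCanonicalCompact e') (a : L) : canExt e e' (e' a) = e a :=
  le_antisymm (canExt_le_e hc' le_rfl) (e_le_canExt hd hc a)

lemma canExt_canExt {e : L → C} {e' : L → C'} (hd : IsCanonicalDense e)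
    (hc : IsCanonicalCompact e) (hc' : IsCanonicalCompact e') (u : C) :
    canExt e e' (canExt e' e u) = u := by
  apply le_antisymm
  · refine sSup_le ?_
    rintro x ⟨F, hF, h1, rfl⟩
    refine hd _ _ fun G a hG hGF hua => ?_
    have hκ : canExt e' e u ≤ e' a := canExt_le_e hc hua
    have ha : a ∈ F := hc' F a hF (h1.trans hκ)
    exact hGF.trans (sInf_le (Set.mem_image_of_mem e ha))
  · refine hd _ _ fun F a hF h1 h2 => ?_
    have : sInf (e '' F) ≤ canExt e e' (canExt e' e u) :=
      le_sSup ⟨F, hF, le_sSup ⟨F, hF, h1, rfl⟩, rfl⟩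
    exact this.trans h2

lemma canExt_le_canExt {e : L → C} {e' : L → C'} (hd' : IsCanonicalDense e')
    (hc : IsCanonicalCompact e) (hc' : IsCanonicalCompact e') {u v : C'}
    (h : canExt e e' u ≤ canExt e e' v) : u ≤ v := by
  refine hd' _ _ fun F a hF h1 h2 => ?_
  have h3 : sInf (e '' F) ≤ canExt e e' u := le_sSup ⟨F, hF, h1, rfl⟩
  have h4 : canExt e e' v ≤ e a := canExt_le_e hc' h2
  have ha : a ∈ F := hc F a hF ((h3.trans h).trans h4)
  exact sInf_le (Set.mem_image_of_mem e' ha)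

end Aux

/-- Uniqueness of canonical extensions: if `e : L → C` and `e' : L → C'` are both
monotone, dense and compact maps from a frame `L` into complete lattices, then there
is a unique complete lattice (order) isomorphism `ι : C' → C` with `ι ∘ e' = e`. -/
theorem canonicalExtension_unique {L C C' : Type*} [Order.Frame L] [CompleteLattice C]
    [CompleteLattice C'] (e : L → C) (e' : L → C')
    (hmono : Monotone e) (hdense : IsCanonicalDense e) (hcompact : IsCanonicalCompact e)
    (hmono' : Monotone e') (hdense' : IsCanonicalDense e') (hcompact' : IsCanonicalCompact e') :
    ∃! ι : C' ≃o C, ∀ a : L, ι (e' a) = e a := by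
  refine ⟨⟨⟨canExt e e', canExt e' e,
      canExt_canExt hdense' hcompact' hcompact, canExt_canExt hdense hcompact hcompact'⟩,
      fun {u v} => ⟨canExt_le_canExt hdense' hcompact hcompact', fun h => canExt_mono e e' h⟩⟩,
    fun a => canExt_e' hdense hcompact hcompact' a, ?_⟩
  intro ι' hι'
  have hsymm : ∀ a, ι'.symm (e a) = e' a := fun a => by
    rw [← hι' a, OrderIso.symm_apply_apply]
  have key : ∀ F : Set L, ι'.symm '' (e '' F) = e' '' F := fun F => by
    rw [Set.image_image]
    exact Set.image_congr fun a _ => hsymm a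
  ext v
  show ι' v = canExt e e' v
  apply le_antisymm
  · refine hdense _ _ fun F a hF h1 h2 => ?_
    have h1' : sInf (e' '' F) ≤ v := by
      have := ι'.symm.monotone h1
      rwa [OrderIso.symm_apply_apply, OrderIso.map_sInf, ← sInf_image, key] at this
    have h3 : sInf (e '' F) ≤ canExt e e' v := le_sSup ⟨F, hF, h1', rfl⟩
    exact h3.trans h2
  · refine hdense _ _ fun F a hF h1 h2 => ?_
    have hv' : v ≤ e' a := by
      have := ι'.symm.monotone h2
      rwa [OrderIso.symm_apply_apply, hsymm] at this
    exact h1.trans (canExt_le_e hcompact' hv')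
end

section
/- For a sober topological space X, the inclusion of the frame of opens O(X) into the complete lattice of saturated subsets Up(X) is dense and compact, i.e., it is a canonical extension of the frame O(X). -/
open TopologicalSpace in
/-- For a sober space `X`, the inclusion of the frame of opens into the complete
lattice of saturated subsets (upsets for the specialisation order, in which meets are
intersections and the order is inclusion) is dense and compact, i.e. it is a canonical
extension of `O(X)`. -/
theorem opens_into_saturated_isCanonicalExtension {X : Type*} [TopologicalSpace X]
    [QuasiSober X] [T0Space X] :
    (∀ u v : Set X,
      (∀ ⦃x⦄, x ∈ u → ∀ ⦃y⦄, (∀ U : Set X, IsOpen U → x ∈ U → y ∈ U) → y ∈ u) →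
      (∀ ⦃x⦄, x ∈ v → ∀ ⦃y⦄, (∀ U : Set X, IsOpen U → x ∈ U → y ∈ U) → y ∈ v) →
      (∀ (F : Set (Opens X)) (a : Opens X), IsScottOpenFilter F →
        (⋂ U ∈ F, (U : Set X)) ⊆ u → v ⊆ (a : Set X) →
        (⋂ U ∈ F, (U : Set X)) ⊆ (a : Set X)) →
      u ⊆ v) ∧
    (∀ (F : Set (Opens X)) (a : Opens X), IsScottOpenFilter F →
      (⋂ U ∈ F, (U : Set X)) ⊆ (a : Set X) → a ∈ F) := by
  constructor
  · -- density
    intro u v hu hv h x hxu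
    by_contra hxv
    -- the Scott-open filter of opens containing x
    set F : Set (Opens X) := {U | x ∈ U} with hF
    have hFsof : IsScottOpenFilter F := by
      refine ⟨fun a b ha hab => hab ha, trivial, fun a b ha hb => ⟨ha, hb⟩, ?_⟩
      intro D _ _ hD
      have : x ∈ (↑(sSup D) : Set X) := hD
      rw [Opens.coe_sSup] at this
      obtain ⟨i, hi, hxi⟩ : ∃ i ∈ D, x ∈ i := by simpa using this
      exact ⟨i, hi, hxi⟩
    set a : Opens X := ⟨(closure {x})ᶜ, isClosed_closure.isOpen_compl⟩ with ha
    have hva : v ⊆ (a : Set X) := by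
      intro z hz hzc
      exact hxv (hv hz (fun U hU hzU => by
        rcases mem_closure_iff.mp hzc U hU hzU with ⟨w, hw, rfl⟩
        exact hw))
    have hFu : (⋂ U ∈ F, (U : Set X)) ⊆ u := by
      intro y hy
      exact hu hxu (fun U hU hxU => Set.mem_iInter₂.mp hy ⟨U, hU⟩ hxU)
    have := h F a hFsof hFu hva
    have hxF : x ∈ ⋂ U ∈ F, (U : Set X) := Set.mem_iInter₂.mpr fun U hU => hU
    exact (this hxF) (subset_closure rfl)
  · -- compactness: Hofmann–Mislove
    intro F a hF ha
    by_contra haF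
    -- Zorn: maximal open ⊇ a not in F
    obtain ⟨m, ham, hmS, hmax⟩ := zorn_le_nonempty₀ {U : Opens X | a ≤ U ∧ U ∉ F}
      (by
        intro c hcs hc y hy
        refine ⟨sSup c, ⟨((hcs hy).1).trans (le_sSup hy), ?_⟩, fun z hz => le_sSup hz⟩
        intro hsup
        obtain ⟨d, hdc, hdF⟩ := hF.scottOpen c ⟨y, hy⟩ hc.directedOn hsup
        exact (hcs hdc).2 hdF) a ⟨le_rfl, haF⟩
    obtain ⟨ham', hmF⟩ := hmS
    -- mᶜ is irreducible closed
    have hne : ((m : Set X)ᶜ).Nonempty := by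
      rw [Set.nonempty_compl]
      intro hm
      exact hmF (by
        have : m = ⊤ := by ext z; simp [hm ▸ Set.mem_univ z, hm]
        exact this ▸ hF.top_mem)
    have key : ∀ W : Opens X, ((m : Set X)ᶜ ∩ W).Nonempty → m ⊔ W ∈ F := by
      intro W ⟨z, hzm, hzW⟩
      by_contra hW
      have : m = m ⊔ W := by
        refine le_antisymm le_sup_left (hmax ⟨ham'.trans le_sup_left, hW⟩ le_sup_left)
      exact hzm (this ▸ (Opens.coe_sup m W ▸ Set.mem_union_right _ hzW : z ∈ (↑(m ⊔ W) : Set X)))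
    have hirr : IsIrreducible ((m : Set X)ᶜ) := by
      refine ⟨hne, fun U V hU hV h1 h2 => ?_⟩
      by_contra hUV
      have hsub : U ∩ V ⊆ (m : Set X) := by
        intro z hz
        by_contra hzm
        exact hUV ⟨z, hzm, hz⟩
      have h1' := key ⟨U, hU⟩ h1
      have h2' := key ⟨V, hV⟩ h2
      have hm : m ⊔ (⟨U, hU⟩ ⊓ ⟨V, hV⟩ : Opens X) = m := by
        apply le_antisymm _ le_sup_left
        refine sup_le le_rfl ?_
        intro z hz
        exact hsub hz
      have : (m ⊔ ⟨U, hU⟩) ⊓ (m ⊔ ⟨V, hV⟩) ∈ F := hF.inf_mem h1' h2'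
      rw [← sup_inf_left, hm] at this
      exact hmF this
    obtain ⟨x, hx⟩ := QuasiSober.sober hirr m.isOpen.isClosed_compl
    have hxF : x ∈ ⋂ U ∈ F, (U : Set X) := by
      refine Set.mem_iInter₂.mpr fun V hV => ?_
      by_contra hxV
      refine hmF (hF.mem_of_le hV ?_)
      intro z hzV
      by_contra hzm
      have : z ∈ closure ({x} : Set X) := hx ▸ hzm
      exact hxV (by
        rcases mem_closure_iff.mp this V V.isOpen hzV with ⟨w, hw, rfl⟩
        exact hw)
    have : x ∈ (m : Set X) := ham (ha hxF)
    exact (hx ▸ subset_closure rfl : x ∈ ((m : Set X)ᶜ)) this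
end

section
/- Let h : L → M be a preframe homomorphism between frames, with canonical extensions e_L : L → L^δ and e_M : M → M^δ. Define the σ-extension h^σ(u) = ⋁{⋀e_M[h[F]] | F Scott-open filter of L, ⋀e_L[F] ≤ u}. Then h^σ ∘ e_L = e_M ∘ h, i.e., h^σ extends h. -/
/-- A preframe homomorphism between frames: preserves finite meets and directed joins. -/
def IsPreframeHom {L M : Type*} [Order.Frame L] [Order.Frame M] (f : L → M) : Prop :=
  f ⊤ = ⊤ ∧ (∀ a b : L, f (a ⊓ b) = f a ⊓ f b) ∧
    ∀ D : Set L, D.Nonempty → DirectedOn (· ≤ ·) D → f (sSup D) = sSup (f '' D)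

/-- For a preframe homomorphism `h : L → M` between frames with canonical extensions
`e_L : L → L^δ` and `e_M : M → M^δ`, the σ-extension
`h^σ(u) = ⋁{⋀ e_M[h[F]] | F Scott-open, ⋀ e_L[F] ≤ u}` extends `h`:
`h^σ(e_L a) = e_M (h a)` for all `a`. -/
theorem sigmaExtension_extends {L M Lδ Mδ : Type*} [Order.Frame L] [Order.Frame M]
    [CompleteLattice Lδ] [CompleteLattice Mδ] (eL : L → Lδ) (eM : M → Mδ)
    (hLmono : Monotone eL) (hLdense : IsCanonicalDense eL) (hLcompact : IsCanonicalCompact eL)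
    (hMmono : Monotone eM) (hMdense : IsCanonicalDense eM) (hMcompact : IsCanonicalCompact eM)
    (h : L → M) (hh : IsPreframeHom h) :
    ∀ a : L,
      sSup {w : Mδ | ∃ F : Set L, IsScottOpenFilter F ∧ sInf (eL '' F) ≤ eL a ∧
          w = sInf (eM '' (h '' F))} = eM (h a) := by
  obtain ⟨htop, hinf, hdir⟩ := hh
  have hmono : Monotone h := by
    intro a b hab
    have : h (a ⊓ b) = h a ⊓ h b := hinf a b
    rw [inf_eq_left.2 hab] at this
    exact this ▸ inf_le_right
  -- preimage of a Scott-open filter is a Scott-open filter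
  have hpre : ∀ G : Set M, IsScottOpenFilter G → IsScottOpenFilter (h ⁻¹' G) := by
    intro G hG
    refine ⟨fun a b ha hab => hG.mem_of_le ha (hmono hab), ?_, ?_, ?_⟩
    · show h ⊤ ∈ G; rw [htop]; exact hG.top_mem
    · intro a b ha hb
      show h (a ⊓ b) ∈ G
      rw [hinf]; exact hG.inf_mem ha hb
    · intro D hne hDir hmem
      have : sSup (h '' D) ∈ G := by
        rw [← hdir D hne hDir]; exact hmem
      obtain ⟨m, hmD, hmG⟩ := hG.scottOpen (h '' D) (hne.image h)
        (by rintro _ ⟨x, hx, rfl⟩ _ ⟨y, hy, rfl⟩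
            obtain ⟨z, hz, hxz, hyz⟩ := hDir x hx y hy
            exact ⟨h z, ⟨z, hz, rfl⟩, hmono hxz, hmono hyz⟩) this
      obtain ⟨d, hd, rfl⟩ := hmD
      exact ⟨d, hd, hmG⟩
  intro a
  apply le_antisymm
  · apply sSup_le
    rintro w ⟨F, hF, hle, rfl⟩
    have haF : a ∈ F := hLcompact F a hF hle
    exact sInf_le ⟨h a, ⟨a, haF, rfl⟩, rfl⟩
  · apply hMdense
    intro G b hG hGle hble
    have hhaG : h a ∈ G := hMcompact G (h a) hG hGle
    set F := h ⁻¹' G with hFdef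
    have hF : IsScottOpenFilter F := hpre G hG
    have haF : a ∈ F := hhaG
    have h1 : sInf (eL '' F) ≤ eL a := sInf_le ⟨a, haF, rfl⟩
    have h2 : sInf (eM '' (h '' F)) ∈ {w : Mδ | ∃ F : Set L, IsScottOpenFilter F ∧
        sInf (eL '' F) ≤ eL a ∧ w = sInf (eM '' (h '' F))} := ⟨F, hF, h1, rfl⟩
    calc sInf (eM '' G) ≤ sInf (eM '' (h '' F)) := by
          apply le_sInf
          rintro w ⟨m, ⟨l, hl, rfl⟩, rfl⟩
          exact sInf_le ⟨h l, hl, rfl⟩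
      _ ≤ eM b := le_trans (le_sSup h2) hble
end

section
/- Let h : L → M be a perfect frame homomorphism between frames. Then the common σ- and π-extension h^δ : L^δ → M^δ preserves arbitrary meets and arbitrary joins (it is a complete lattice homomorphism). -/
/-- A frame homomorphism: preserves finite meets and arbitrary joins. -/
def IsFrameHom {L M : Type*} [Order.Frame L] [Order.Frame M] (h : L → M) : Prop :=
  h ⊤ = ⊤ ∧ (∀ a b : L, h (a ⊓ b) = h a ⊓ h b) ∧ ∀ S : Set L, h (sSup S) = sSup (h '' S)

/-- A monotone map `h : L → M` is perfect if for every Scott-open filter `F` of `L`,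
the filter generated by `h[F]` (upward closure of finite meets of elements of `h[F]`)
is Scott-open. -/
def IsPerfect {L M : Type*} [Order.Frame L] [Order.Frame M] (h : L → M) : Prop :=
  ∀ F : Set L, IsScottOpenFilter F →
    IsScottOpenFilter {b : M | ∃ s : Finset L, (↑s : Set L) ⊆ F ∧ s.inf h ≤ b}

/-- The σ-extension of a map `h : L → M` relative to canonical extensions
`eL : L → Lδ`, `eM : M → Mδ`. -/
def sigmaExt {L M Lδ Mδ : Type*} [Order.Frame L] [Order.Frame M]
    [CompleteLattice Lδ] [CompleteLattice Mδ] (eL : L → Lδ) (eM : M → Mδ)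
    (h : L → M) (u : Lδ) : Mδ :=
  sSup {w : Mδ | ∃ F : Set L, IsScottOpenFilter F ∧ sInf (eL '' F) ≤ u ∧
      w = sInf (eM '' (h '' F))}

/-- The π-extension of a map `h : L → M` relative to canonical extensions
`eL : L → Lδ`, `eM : M → Mδ`. -/
def piExt {L M Lδ Mδ : Type*} [Order.Frame L] [Order.Frame M]
    [CompleteLattice Lδ] [CompleteLattice Mδ] (eL : L → Lδ) (eM : M → Mδ)
    (h : L → M) (u : Lδ) : Mδ :=
  sInf {w : Mδ | ∃ a : L, u ≤ eL a ∧ w = eM (h a)}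


section AuxPerfect

variable {L C : Type*} [Order.Frame L] [CompleteLattice C] {e : L → C}

/-- To show `x ≤ y` it suffices that every closed (filter) element below `x` is below `y`. -/
lemma le_of_forall_hat_aux (hd : IsCanonicalDense e) {x y : C}
    (H : ∀ F : Set L, IsScottOpenFilter F → sInf (e '' F) ≤ x → sInf (e '' F) ≤ y) :
    x ≤ y :=
  hd x y fun F a hF hFx hya => (H F hF hFx).trans hya

/-- To show `x ≤ y` it suffices that every open element above `y` is above `x`. -/
lemma le_of_forall_open_aux (hd : IsCanonicalDense e) {x y : C}
    (H : ∀ a : L, y ≤ e a → x ≤ e a) : x ≤ y :=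
  hd x y fun F a hF hFx hya => hFx.trans (H a hya)

end AuxPerfect

/-- For a perfect frame homomorphism `h : L → M`, the σ- and π-extensions coincide,
and the common extension `h^δ : L^δ → M^δ` preserves arbitrary meets and arbitrary
joins, i.e. it is a complete lattice homomorphism. -/
theorem perfect_frameHom_extension_complete {L M Lδ Mδ : Type*} [Order.Frame L]
    [Order.Frame M] [CompleteLattice Lδ] [CompleteLattice Mδ] (eL : L → Lδ) (eM : M → Mδ)
    (hLmono : Monotone eL) (hLdense : IsCanonicalDense eL) (hLcompact : IsCanonicalCompact eL)
    (hMmono : Monotone eM) (hMdense : IsCanonicalDense eM) (hMcompact : IsCanonicalCompact eM)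
    (h : L → M) (hh : IsFrameHom h) (hperf : IsPerfect h) :
    (∀ u : Lδ, sigmaExt eL eM h u = piExt eL eM h u) ∧
    (∀ S : Set Lδ, sigmaExt eL eM h (sInf S) = sInf (sigmaExt eL eM h '' S)) ∧
    (∀ S : Set Lδ, sigmaExt eL eM h (sSup S) = sSup (sigmaExt eL eM h '' S)) := by
  classical
  obtain ⟨htop, hinf, hsupp⟩ := hh
  have hhm : Monotone h := by
    intro a b hab
    calc h a = h (a ⊓ b) := by rw [inf_eq_left.mpr hab]
    _ = h a ⊓ h b := hinf a b
    _ ≤ h b := inf_le_right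
  -- h maps finset infima to finset infima
  have hmapinf : ∀ t : Finset L, h (t.inf id) = t.inf h := by
    intro t
    induction t using Finset.induction_on with
    | empty => simpa using htop
    | @insert a s has ih =>
      rw [Finset.inf_insert, Finset.inf_insert, hinf, ih, id]
  -- a Scott-open filter contains the infimum of any finite subset
  have hfinmem : ∀ (F : Set L), IsScottOpenFilter F → ∀ t : Finset L,
      (↑t : Set L) ⊆ F → t.inf id ∈ F := by
    intro F hF t
    induction t using Finset.induction_on with
    | empty => intro _; simpa using hF.top_mem
    | @insert a s has ih =>
      intro hsub
      rw [Finset.inf_insert]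
      refine hF.inf_mem ?_ (ih ?_)
      · exact hsub (by simp)
      · intro x hx; exact hsub (by simp [hx])
  -- the preimage of a Scott-open filter under h is a Scott-open filter
  have hpre : ∀ G : Set M, IsScottOpenFilter G →
      IsScottOpenFilter {a : L | h a ∈ G} := by
    intro G hG
    constructor
    · intro a b ha hab; exact hG.mem_of_le ha (hhm hab)
    · show h ⊤ ∈ G; rw [htop]; exact hG.top_mem
    · intro a b ha hb; show h (a ⊓ b) ∈ G; rw [hinf]; exact hG.inf_mem ha hb
    · intro D hne hdir hsup
      have hsup' : sSup (h '' D) ∈ G := by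
        rw [← hsupp]; exact hsup
      have hdir' : DirectedOn (· ≤ ·) (h '' D) := by
        rintro _ ⟨a, ha, rfl⟩ _ ⟨b, hb, rfl⟩
        obtain ⟨c, hc, hac, hbc⟩ := hdir a ha b hb
        exact ⟨h c, ⟨c, hc, rfl⟩, hhm hac, hhm hbc⟩
      obtain ⟨_, ⟨d, hd, rfl⟩, hdG⟩ := hG.scottOpen _ (hne.image h) hdir' hsup'
      exact ⟨d, hd, hdG⟩
  -- σ ≤ π
  have hsp : ∀ u : Lδ, sigmaExt eL eM h u ≤ piExt eL eM h u := by
    intro u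
    apply sSup_le
    rintro w ⟨F, hF, hFu, rfl⟩
    apply le_sInf
    rintro w' ⟨a, hua, rfl⟩
    have haF : a ∈ F := hLcompact F a hF (hFu.trans hua)
    exact sInf_le ⟨h a, ⟨a, haF, rfl⟩, rfl⟩
  -- π ≤ σ
  have hps : ∀ u : Lδ, piExt eL eM h u ≤ sigmaExt eL eM h u := by
    intro u
    apply le_of_forall_hat_aux hMdense
    intro G hG hGpi
    have hF : IsScottOpenFilter {a : L | h a ∈ G} := hpre G hG
    have hFu : sInf (eL '' {a : L | h a ∈ G}) ≤ u := by
      apply le_of_forall_open_aux hLdense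
      intro a hua
      have h1 : sInf (eM '' G) ≤ eM (h a) :=
        hGpi.trans (sInf_le ⟨a, hua, rfl⟩)
      have haG : h a ∈ G := hMcompact G (h a) hG h1
      exact sInf_le ⟨a, haG, rfl⟩
    calc sInf (eM '' G) ≤ sInf (eM '' (h '' {a : L | h a ∈ G})) := by
          apply sInf_le_sInf
          rintro _ ⟨_, ⟨a, haF, rfl⟩, rfl⟩
          exact ⟨h a, haF, rfl⟩
    _ ≤ sigmaExt eL eM h u := le_sSup ⟨_, hF, hFu, rfl⟩
  have heq : ∀ u : Lδ, sigmaExt eL eM h u = piExt eL eM h u :=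
    fun u => le_antisymm (hsp u) (hps u)
  have hfun : sigmaExt eL eM h = piExt eL eM h := funext heq
  -- monotonicity
  have hsmono : Monotone (sigmaExt eL eM h) := by
    intro u v huv
    apply sSup_le_sSup
    rintro w ⟨F, hF, hFu, rfl⟩
    exact ⟨F, hF, hFu.trans huv, rfl⟩
  have hpmono : Monotone (piExt eL eM h) := by
    intro u v huv
    apply sInf_le_sInf
    rintro w ⟨a, hva, rfl⟩
    exact ⟨a, huv.trans hva, rfl⟩
  -- preservation of arbitrary meets (via π)
  have hmeet : ∀ S : Set Lδ, piExt eL eM h (sInf S) = sInf (piExt eL eM h '' S) := by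
    intro S
    apply le_antisymm
    · apply le_sInf
      rintro _ ⟨s, hs, rfl⟩
      exact hpmono (sInf_le hs)
    · apply le_sInf
      rintro _ ⟨a, ha, rfl⟩
      apply le_of_forall_hat_aux hMdense
      intro G hG hGle
      have hF : IsScottOpenFilter {a' : L | h a' ∈ G} := hpre G hG
      have hFS : ∀ s ∈ S, sInf (eL '' {a' : L | h a' ∈ G}) ≤ s := by
        intro s hsS
        apply le_of_forall_open_aux hLdense
        intro a' hsa'
        have h1 : sInf (eM '' G) ≤ eM (h a') :=
          (hGle.trans (sInf_le ⟨s, hsS, rfl⟩)).trans (sInf_le ⟨a', hsa', rfl⟩)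
        exact sInf_le ⟨a', hMcompact G (h a') hG h1, rfl⟩
      have h2 : sInf (eL '' {a' : L | h a' ∈ G}) ≤ eL a :=
        (le_sInf fun s hs => hFS s hs).trans ha
      have haF : h a ∈ G := hLcompact _ a hF h2
      exact sInf_le ⟨h a, haF, rfl⟩
  -- preservation of arbitrary joins
  have hjoin : ∀ S : Set Lδ,
      sigmaExt eL eM h (sSup S) = sSup (sigmaExt eL eM h '' S) := by
    intro S
    apply le_antisymm
    · apply le_of_forall_open_aux hMdense
      intro b hb
      set astar : L := sSup {a : L | h a ≤ b} with hastar
      have hbstar : h astar ≤ b := by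
        rw [hastar, hsupp]
        apply sSup_le
        rintro _ ⟨a, haB, rfl⟩
        exact haB
      have hsub : sSup S ≤ eL astar := by
        apply sSup_le
        intro s hsS
        apply le_of_forall_hat_aux hLdense
        intro F hF hFs
        -- the filter generated by h[F] is Scott-open, by perfectness
        have hG0 : IsScottOpenFilter
            {b' : M | ∃ t : Finset L, (↑t : Set L) ⊆ F ∧ t.inf h ≤ b'} := hperf F hF
        have h1 : sInf (eM '' (h '' F)) ≤ eM b := by
          calc sInf (eM '' (h '' F)) ≤ sigmaExt eL eM h s := le_sSup ⟨F, hF, hFs, rfl⟩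
          _ ≤ sSup (sigmaExt eL eM h '' S) := le_sSup ⟨s, hsS, rfl⟩
          _ ≤ eM b := hb
        have h2 : sInf (eM '' {b' : M | ∃ t : Finset L, (↑t : Set L) ⊆ F ∧ t.inf h ≤ b'})
            ≤ eM b := by
          refine le_trans (sInf_le_sInf ?_) h1
          rintro _ ⟨_, ⟨a, haF, rfl⟩, rfl⟩
          refine ⟨h a, ⟨{a}, ?_, ?_⟩, rfl⟩
          · simpa using haF
          · simp
        obtain ⟨t, htF, htb⟩ := hMcompact _ b hG0 h2
        have haF' : t.inf id ∈ F := hfinmem F hF t htF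
        have hbB : t.inf id ≤ astar := le_sSup (by rw [Set.mem_setOf_eq, hmapinf]; exact htb)
        have hstarF : astar ∈ F := hF.mem_of_le haF' hbB
        exact sInf_le ⟨astar, hstarF, rfl⟩
      rw [heq]
      have hterm : piExt eL eM h (sSup S) ≤ eM (h astar) := sInf_le ⟨astar, hsub, rfl⟩
      exact hterm.trans (hMmono hbstar)
    · apply sSup_le
      rintro _ ⟨s, hs, rfl⟩
      exact hsmono (le_sSup hs)
  refine ⟨heq, ?_, hjoin⟩
  intro S
  rw [hfun, hmeet S]
end
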